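/- Let (I₁, R₁) be a transition system over a type C₁ (the concrete semantics of a program) and (I₂, R₂) a transition system over a type C₂ (its symbolic semantics). Suppose H : C₁ → C₂ → Prop is a simulation from the first system to the second and H' : C₂ → C₁ → Prop is a simulation from the second system to the first, and let φ₁ : C₁ → Prop and φ₂ : C₂ → Prop be properties such that whenever H(c₁, c₂) holds, φ₂(c₂) implies φ₁(c₁), and whenever H'(c₂, c₁) holds, φ₁(c₁) implies φ₂(c₂). Then for every natural number k, the k-bounded invariant property φ₁^k holds in the concrete system if and only if there is no initialized path d₀, d₁, …, d_k of length k in the symbolic system with ¬φ₂(d_i) for some 0 ≤ i ≤ k (i.e., if and only if the symbolic counter-example formula path(d₀,…,d_k) ∧ ⋁_{i=0}^{k} ¬φ₂(d_i) is unsatisfiable). -/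

import Mathlib

/-- `c` is an initialized path of length `k`: `I (c 0)` holds and
`R (c i) (c (i+1))` for all `0 ≤ i < k`. -/
def IsInitPath {C : Type*} (I : C → Prop) (R : C → C → Prop) (k : ℕ) (c : ℕ → C) : Prop :=
  I (c 0) ∧ ∀ i < k, R (c i) (c (i + 1))

/-- The `k`-bounded invariant property `φ^k`: along every initialized path of
length `k`, `φ` holds at every index `i ≤ k`. -/
def BoundedInvariant {C : Type*} (I : C → Prop) (R : C → C → Prop) (φ : C → Prop) (k : ℕ) : Prop :=
  ∀ c : ℕ → C, IsInitPath I R k c → ∀ i ≤ k, φ (c i)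

/-- `H` is a simulation from the system `(I₁, R₁)` to the system `(I₂, R₂)`. -/
def IsSimulation {C₁ C₂ : Type*} (I₁ : C₁ → Prop) (R₁ : C₁ → C₁ → Prop)
    (I₂ : C₂ → Prop) (R₂ : C₂ → C₂ → Prop) (H : C₁ → C₂ → Prop) : Prop :=
  (∀ c₁, I₁ c₁ → ∃ c₂, I₂ c₂ ∧ H c₁ c₂) ∧
  (∀ c₁ c₂ c₁', H c₁ c₂ → R₁ c₁ c₁' → ∃ c₂', R₂ c₂ c₂' ∧ H c₁' c₂')

lemma sim_lift_path {C₁ C₂ : Type*} {I₁ : C₁ → Prop} {R₁ : C₁ → C₁ → Prop}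
    {I₂ : C₂ → Prop} {R₂ : C₂ → C₂ → Prop} {H : C₁ → C₂ → Prop}
    (hH : IsSimulation I₁ R₁ I₂ R₂ H) :
    ∀ (k : ℕ) (c : ℕ → C₁), IsInitPath I₁ R₁ k c →
      ∃ d : ℕ → C₂, IsInitPath I₂ R₂ k d ∧ ∀ i ≤ k, H (c i) (d i) := by
  intro k
  induction k with
  | zero =>
    intro c hc
    obtain ⟨d0, hI, hHd⟩ := hH.1 (c 0) hc.1
    refine ⟨fun _ => d0, ⟨hI, fun i hi => absurd hi (Nat.not_lt_zero i)⟩, ?_⟩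
    intro i hi
    interval_cases i
    exact hHd
  | succ k ih =>
    intro c hc
    obtain ⟨d, hd, hHd⟩ := ih c ⟨hc.1, fun i hi => hc.2 i (hi.trans (Nat.lt_succ_self k))⟩
    obtain ⟨dk', hR, hH'⟩ := hH.2 (c k) (d k) (c (k + 1)) (hHd k le_rfl)
      (hc.2 k (Nat.lt_succ_self k))
    refine ⟨fun i => if i = k + 1 then dk' else d i, ⟨?_, ?_⟩, ?_⟩
    · simpa using hd.1
    · intro i hi
      rcases Nat.lt_succ_iff_lt_or_eq.mp hi with h | h
      · have h1 : i ≠ k + 1 := by omega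
        have h2 : i + 1 ≠ k + 1 := by omega
        simpa [h1, h2, show i ≠ k by omega] using hd.2 i h
      · subst h
        simpa [Nat.succ_ne_self] using hR
    · intro i hi
      rcases Nat.lt_succ_iff_lt_or_eq.mp (Nat.lt_succ_of_le hi) with h | h
      · have h1 : i ≠ k + 1 := by omega
        simpa [h1] using hHd i (by omega)
      · subst h
        simpa using hH'

theorem concrete_bounded_invariant_iff_symbolic_counterexample_unsat {C₁ C₂ : Type*}
    (I₁ : C₁ → Prop) (R₁ : C₁ → C₁ → Prop)
    (I₂ : C₂ → Prop) (R₂ : C₂ → C₂ → Prop)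
    (H : C₁ → C₂ → Prop) (hH : IsSimulation I₁ R₁ I₂ R₂ H)
    (H' : C₂ → C₁ → Prop) (hH' : IsSimulation I₂ R₂ I₁ R₁ H')
    (φ₁ : C₁ → Prop) (φ₂ : C₂ → Prop)
    (hφ : ∀ c₁ c₂, H c₁ c₂ → φ₂ c₂ → φ₁ c₁)
    (hφ' : ∀ c₂ c₁, H' c₂ c₁ → φ₁ c₁ → φ₂ c₂) :
    ∀ k : ℕ, BoundedInvariant I₁ R₁ φ₁ k ↔
      ¬ ∃ d : ℕ → C₂, IsInitPath I₂ R₂ k d ∧ ∃ i ≤ k, ¬ φ₂ (d i) := by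
  intro k
  constructor
  · rintro hinv ⟨d, hd, i, hik, hnφ⟩
    obtain ⟨c, hc, hHc⟩ := sim_lift_path hH' k d hd
    exact hnφ (hφ' (d i) (c i) (hHc i hik) (hinv c hc i hik))
  · intro hnc c hc i hik
    by_contra hn
    obtain ⟨d, hd, hHd⟩ := sim_lift_path hH k c hc
    exact hnc ⟨d, hd, i, hik, fun h => hn (hφ (c i) (d i) (hHd i hik) h)⟩
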